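/- arXiv:0903.5140 — 3 statements merged into one kernel-verified Lean document; each statement's English description precedes it below -/
import Mathlib

section
/- Let (Γ, R) be an admissible monomial bound quiver. A quiver admits string functions S, T : Γ₁ → {±1} satisfying conditions (1)–(4) if and only if it is almost gentle, i.e.: (a) each vertex has at most two outgoing and at most two incoming arrows; (b) for each arrow α there is at most one arrow α' with s α' = t α and α'α ∉ R, and at most one arrow α' with t α' = s α and αα' ∉ R; (c) for each arrow α there is at most one arrow α' with s α' = t α and α'α ∈ R, and at most one arrow α' with t α' = s α and αα' ∈ R. -/
noncomputable section
open Classical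

/-- A quiver: a set of vertices, a set of arrows, and source/target maps. -/
structure Quiv : Type 1 where
  V : Type
  A : Type
  src : A → V
  tgt : A → V

namespace Quiv

variable (Q : Quiv)

/-- Letters of the double quiver: direct arrows (`inl`) and formal inverses (`inr`). -/
abbrev Letter := Q.A ⊕ Q.A

/-- Source of a letter of the double quiver. -/
def srcL : Q.Letter → Q.V := Sum.elim Q.src Q.tgt

/-- Target of a letter of the double quiver. -/
def tgtL : Q.Letter → Q.V := Sum.elim Q.tgt Q.src

/-- Inversion of a single letter. -/
def swapL : Q.Letter → Q.Letter := Sum.elim Sum.inr Sum.inl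

/-- Inversion of a walk in the double quiver: `(ω'ω'')⁻¹ = ω''⁻¹ω'⁻¹`. -/
def invStr (z : List Q.Letter) : List Q.Letter := (z.map Q.swapL).reverse

/-- The composability condition for a list of arrows `α₁ ⋯ α_l` (`s αᵢ = t α_{i+1}`). -/
def ChainP (l : List Q.A) : Prop := l.Chain' fun a b => Q.src a = Q.tgt b

/-- `l` is a path from `x` to `y` (trivial paths are represented by the empty list). -/
def PathBtw (x y : Q.V) (l : List Q.A) : Prop :=
  Q.ChainP l ∧ ((l = [] ∧ x = y) ∨
    (l.getLast?.map Q.src = some x ∧ l.head?.map Q.tgt = some y))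

/-- `l` is a path from `x` to `y` in the monomial bound quiver `(Q, R)`,
i.e. it avoids every relation of `R` as a consecutive subpath. -/
def PathIn (R : Set (List Q.A)) (x y : Q.V) (l : List Q.A) : Prop :=
  Q.PathBtw x y l ∧ ∀ ρ ∈ R, ¬ ρ <:+: l

/-- `l` is a maximal path in the monomial bound quiver `(Q, R)`. -/
def MaximalPathIn (R : Set (List Q.A)) (x y : Q.V) (l : List Q.A) : Prop :=
  Q.PathIn R x y l ∧
    ∀ (y' x'' : Q.V) (p s : List Q.A),
      Q.PathIn R y y' p → Q.PathIn R x'' x s → Q.PathIn R x'' y' (p ++ l ++ s) →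
      p.length + s.length = 0

/-- `S`, `T` are string functions for the bound quiver `(Q, R)`:
they take values in `{±1}` and satisfy the four sign conditions. -/
def StringFuns (R : Set (List Q.A)) (S T : Q.A → ℤ) : Prop :=
  (∀ a, S a = 1 ∨ S a = -1) ∧ (∀ a, T a = 1 ∨ T a = -1) ∧
  (∀ a b, Q.src a = Q.src b → a ≠ b → S a = - S b) ∧
  (∀ a b, Q.tgt a = Q.tgt b → a ≠ b → T a = - T b) ∧
  (∀ a b, Q.src a = Q.tgt b → [a, b] ∉ R → S a = - T b) ∧
  (∀ a b, Q.src a = Q.tgt b → [a, b] ∈ R → S a = T b)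

/-- Extension of `S` to letters of the double quiver (`S α⁻¹ := T α`). -/
def SL (S T : Q.A → ℤ) : Q.Letter → ℤ := Sum.elim S T

/-- Extension of `T` to letters of the double quiver (`T α⁻¹ := S α`). -/
def TL (S T : Q.A → ℤ) : Q.Letter → ℤ := Sum.elim T S

/-- Forbidden consecutive pairs of letters for strings:
relations of `R`, their inverses, and `αα⁻¹`, `α⁻¹α`. -/
def BadPair (R : Set (List Q.A)) : Q.Letter → Q.Letter → Prop
  | .inl a, .inl b => [a, b] ∈ R
  | .inr a, .inr b => [b, a] ∈ R
  | .inl a, .inr b => a = b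
  | .inr a, .inl b => a = b

/-- `z` is (the list of letters of) a string in the bound quiver `(Q, R)`. -/
def IsStringList (R : Set (List Q.A)) (z : List Q.Letter) : Prop :=
  z.Chain' fun a b => Q.srcL a = Q.tgtL b ∧ ¬ Q.BadPair R a b

/-- Forbidden consecutive pairs of letters for homotopy strings: only `αα⁻¹`, `α⁻¹α`. -/
def HBadPair : Q.Letter → Q.Letter → Prop
  | .inl a, .inr b => a = b
  | .inr a, .inl b => a = b
  | _, _ => False

/-- `z` is (the list of letters of) a homotopy string. -/
def IsHStr (z : List Q.Letter) : Prop :=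
  z.Chain' fun a b => Q.srcL a = Q.tgtL b ∧ ¬ Q.HBadPair a b

/-- The degree contribution of a directed string: `+1` for a path, `-1` for an inverse path. -/
def dsgn (p : List Q.Letter) : ℤ :=
  match p.head? with
  | some (.inl _) => 1
  | some (.inr _) => -1
  | none => 0

/-- The degree of a homotopy string given via its decomposition into directed strings. -/
def degD (σs : List (List Q.Letter)) : ℤ := (σs.map Q.dsgn).sum

/-- A directed string: all letters are direct arrows, or all letters are inverse arrows. -/
def DirectedStr (p : List Q.Letter) : Prop :=
  (∀ a ∈ p, a.isLeft = true) ∨ (∀ a ∈ p, a.isRight = true)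

/-- The composition of homotopy strings `p` (left factor) and `q` (right factor) is defined. -/
def HComposable (S T : Q.A → ℤ) (p q : List Q.Letter) : Prop :=
  p.getLast?.map Q.srcL = q.head?.map Q.tgtL ∧
  ∃ a ∈ p.getLast?, ∃ b ∈ q.head?,
    (Q.SL S T a = Q.TL S T b ∧ a.isLeft = b.isLeft) ∨
    (Q.SL S T a = - Q.TL S T b ∧ a.isLeft = !b.isLeft)

/-- `σs` is the decomposition of the homotopy string `ω` into directed strings
of positive length with defined consecutive compositions. -/
def IsDecomp (S T : Q.A → ℤ) (ω : List Q.Letter) (σs : List (List Q.Letter)) : Prop :=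
  σs.flatten = ω ∧ (∀ p ∈ σs, p ≠ [] ∧ Q.DirectedStr p) ∧ σs.Chain' (Q.HComposable S T)

/-- `(Q, R)` together with `S`, `T` is a gentle bound quiver. -/
def IsGentle (R : Set (List Q.A)) (S T : Q.A → ℤ) : Prop :=
  Finite Q.V ∧ Finite Q.A ∧ (∀ ρ ∈ R, Q.ChainP ρ ∧ ρ.length = 2) ∧ Q.StringFuns R S T

/-- Admissibility of a monomial bound quiver: some power of the arrow ideal
lies in the relation ideal. -/
def Admissible (R : Set (List Q.A)) : Prop :=
  ∃ n : ℕ, ∀ (x y : Q.V) (l : List Q.A), Q.PathBtw x y l → n ≤ l.length → ∃ ρ ∈ R, ρ <:+: l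

end Quiv

/-- Choice of an arrow with target `x`, if one exists. -/
noncomputable def pickTgt (Q : Quiv) (x : Q.V) : Option Q.A :=
  if h : ∃ β, Q.tgt β = x then some h.choose else none

/-- Choice of an arrow with source `x`, if one exists. -/
noncomputable def pickSrc (Q : Quiv) (x : Q.V) : Option Q.A :=
  if h : ∃ β, Q.src β = x then some h.choose else none

lemma pickTgt_spec (Q : Quiv) (x : Q.V) (β : Q.A) (h : pickTgt Q x = some β) :
    Q.tgt β = x := by
  unfold pickTgt at h
  split at h
  · next hex => cases h; exact hex.choose_spec
  · cases h

lemma pickSrc_spec (Q : Quiv) (x : Q.V) (β : Q.A) (h : pickSrc Q x = some β) :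
    Q.src β = x := by
  unfold pickSrc at h
  split at h
  · next hex => cases h; exact hex.choose_spec
  · cases h

lemma pickTgt_isSome (Q : Quiv) (x : Q.V) (b : Q.A) (hb : Q.tgt b = x) :
    ∃ β, pickTgt Q x = some β := by
  unfold pickTgt
  rw [dif_pos ⟨b, hb⟩]
  exact ⟨_, rfl⟩

lemma pickSrc_isSome (Q : Quiv) (x : Q.V) (b : Q.A) (hb : Q.src b = x) :
    ∃ β, pickSrc Q x = some β := by
  unfold pickSrc
  rw [dif_pos ⟨b, hb⟩]
  exact ⟨_, rfl⟩

/-- The constructed string function `S`. -/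
noncomputable def mkS (Q : Quiv) (R : Set (List Q.A)) (a : Q.A) : ℤ :=
  (pickTgt Q (Q.src a)).elim
    ((pickSrc Q (Q.src a)).elim 1 (fun c => if a = c then 1 else -1))
    (fun β => if [a, β] ∈ R then 1 else -1)

/-- The constructed string function `T`. -/
noncomputable def mkT (Q : Quiv) (a : Q.A) : ℤ :=
  (pickTgt Q (Q.tgt a)).elim 1 (fun β => if a = β then 1 else -1)

/-- An admissible monomial bound quiver admits string functions if and only if it is
almost gentle: (a) each vertex has at most two outgoing and at most two incoming
arrows; (b) for each arrow `α` there is at most one arrow `α'` with `s α' = t α` and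
`α'α ∉ R`, and at most one `α'` with `t α' = s α` and `αα' ∉ R`; (c) the same with
`∈ R` in place of `∉ R`. -/
theorem stmt_5 (Q : Quiv) (R : Set (List Q.A))
    (hmono : ∀ ρ ∈ R, Q.ChainP ρ ∧ 2 ≤ ρ.length) (hadm : Q.Admissible R) :
    (∃ S T : Q.A → ℤ, Q.StringFuns R S T) ↔
      ((∀ (x : Q.V) (a b c : Q.A),
          Q.src a = x → Q.src b = x → Q.src c = x → a = b ∨ a = c ∨ b = c) ∧
       (∀ (x : Q.V) (a b c : Q.A),
          Q.tgt a = x → Q.tgt b = x → Q.tgt c = x → a = b ∨ a = c ∨ b = c) ∧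
       (∀ a a' a'' : Q.A, Q.src a' = Q.tgt a → [a', a] ∉ R →
          Q.src a'' = Q.tgt a → [a'', a] ∉ R → a' = a'') ∧
       (∀ a a' a'' : Q.A, Q.tgt a' = Q.src a → [a, a'] ∉ R →
          Q.tgt a'' = Q.src a → [a, a''] ∉ R → a' = a'') ∧
       (∀ a a' a'' : Q.A, Q.src a' = Q.tgt a → [a', a] ∈ R →
          Q.src a'' = Q.tgt a → [a'', a] ∈ R → a' = a'') ∧
       (∀ a a' a'' : Q.A, Q.tgt a' = Q.src a → [a, a'] ∈ R →
          Q.tgt a'' = Q.src a → [a, a''] ∈ R → a' = a'')) := by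
  constructor
  · rintro ⟨S, T, hS1, hT1, hc1, hc2, hc3, hc4⟩
    refine ⟨?_, ?_, ?_, ?_, ?_, ?_⟩
    · intro x a b c ha hb hc
      by_contra h
      push_neg at h
      obtain ⟨hab, hac, hbc⟩ := h
      have e1 := hc1 a b (ha.trans hb.symm) hab
      have e2 := hc1 a c (ha.trans hc.symm) hac
      have e3 := hc1 b c (hb.trans hc.symm) hbc
      rcases hS1 c with h | h <;> omega
    · intro x a b c ha hb hc
      by_contra h
      push_neg at h
      obtain ⟨hab, hac, hbc⟩ := h
      have e1 := hc2 a b (ha.trans hb.symm) hab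
      have e2 := hc2 a c (ha.trans hc.symm) hac
      have e3 := hc2 b c (hb.trans hc.symm) hbc
      rcases hT1 c with h | h <;> omega
    · intro a a' a'' h1 h2 h3 h4
      by_contra hne
      have e1 := hc3 a' a h1 h2
      have e2 := hc3 a'' a h3 h4
      have e3 := hc1 a' a'' (h1.trans h3.symm) hne
      rcases hT1 a with h | h <;> omega
    · intro a a' a'' h1 h2 h3 h4
      by_contra hne
      have e1 := hc3 a a' h1.symm h2
      have e2 := hc3 a a'' h3.symm h4
      have e3 := hc2 a' a'' (h1.trans h3.symm) hne
      rcases hS1 a with h | h <;> omega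
    · intro a a' a'' h1 h2 h3 h4
      by_contra hne
      have e1 := hc4 a' a h1 h2
      have e2 := hc4 a'' a h3 h4
      have e3 := hc1 a' a'' (h1.trans h3.symm) hne
      rcases hT1 a with h | h <;> omega
    · intro a a' a'' h1 h2 h3 h4
      by_contra hne
      have e1 := hc4 a a' h1.symm h2
      have e2 := hc4 a a'' h3.symm h4
      have e3 := hc2 a' a'' (h1.trans h3.symm) hne
      rcases hS1 a with h | h <;> omega
  · rintro ⟨h1, h2, h3, h4, h5, h6⟩
    refine ⟨mkS Q R, mkT Q, ?_, ?_, ?_, ?_, ?_, ?_⟩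
    · intro a
      unfold mkS
      rcases hpt : pickTgt Q (Q.src a) with _ | β
      · rcases hps : pickSrc Q (Q.src a) with _ | c
        · simp
        · simp only [Option.elim_some, Option.elim_none]; split <;> simp
      · simp only [Option.elim_some]; split <;> simp
    · intro a
      unfold mkT
      rcases hpt : pickTgt Q (Q.tgt a) with _ | β
      · simp
      · simp only [Option.elim_some]; split <;> simp
    · -- condition (1)
      intro a b hab hne
      unfold mkS
      rw [hab]
      rcases hpt : pickTgt Q (Q.src b) with _ | β
      · obtain ⟨c, hc⟩ := pickSrc_isSome Q (Q.src b) b rfl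
        rw [hc]
        simp only [Option.elim_none, Option.elim_some]
        have hcsrc := pickSrc_spec Q (Q.src b) c hc
        have := h1 (Q.src b) a b c hab rfl hcsrc
        rcases this with h | h | h
        · exact absurd h hne
        · rw [if_pos h, if_neg (fun hbc => hne (h.trans hbc.symm))]; norm_num
        · rw [if_neg (fun hac => hne (hac.trans h.symm)), if_pos h]
      · have hβ := pickTgt_spec Q (Q.src b) β hpt
        simp only [Option.elim_some]
        by_cases hra : [a, β] ∈ R
        · rw [if_pos hra]
          by_cases hrb : [b, β] ∈ R
          · exact absurd (h5 β a b (hab.trans hβ.symm) hra (hβ.symm) hrb) hne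
          · rw [if_neg hrb]; ring
        · rw [if_neg hra]
          by_cases hrb : [b, β] ∈ R
          · rw [if_pos hrb]
          · exact absurd (h3 β a b (hab.trans hβ.symm) hra (hβ.symm) hrb) hne
    · -- condition (2)
      intro a b hab hne
      unfold mkT
      rw [hab]
      obtain ⟨β, hβ⟩ := pickTgt_isSome Q (Q.tgt b) b rfl
      rw [hβ]
      simp only [Option.elim_some]
      have hβtgt := pickTgt_spec Q (Q.tgt b) β hβ
      have := h2 (Q.tgt b) a b β hab rfl hβtgt
      rcases this with h | h | h
      · exact absurd h hne
      · rw [if_pos h, if_neg (fun hbβ => hne (h.trans hbβ.symm))]; norm_num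
      · rw [if_neg (fun haβ => hne (haβ.trans h.symm)), if_pos h]
    · -- condition (3): src a = tgt b, [a,b] ∉ R → S a = - T b
      intro a b hab hr
      unfold mkS mkT
      obtain ⟨β, hβ⟩ := pickTgt_isSome Q (Q.src a) b hab.symm
      rw [← hab, hβ]
      simp only [Option.elim_some]
      have hβtgt := pickTgt_spec Q (Q.src a) β hβ
      by_cases hbβ : b = β
      · subst hbβ
        rw [if_neg hr, if_pos rfl]
      · rw [if_neg hbβ]
        have hraβ : [a, β] ∈ R := by
          by_contra hn
          exact hbβ (h4 a b β hab.symm hr hβtgt hn)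
        rw [if_pos hraβ]; ring
    · -- condition (4): src a = tgt b, [a,b] ∈ R → S a = T b
      intro a b hab hr
      unfold mkS mkT
      obtain ⟨β, hβ⟩ := pickTgt_isSome Q (Q.src a) b hab.symm
      rw [← hab, hβ]
      simp only [Option.elim_some]
      have hβtgt := pickTgt_spec Q (Q.src a) β hβ
      by_cases hbβ : b = β
      · subst hbβ
        rw [if_pos hr, if_pos rfl]
      · rw [if_neg hbβ]
        have hraβ : [a, β] ∉ R := by
          intro hn
          exact hbβ (h6 a b β hab.symm hr hβtgt hn)
        rw [if_neg hraβ]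
end
end

section
/- Let (Γ, R) be a gentle bound quiver, x a vertex, and ε ∈ {±1}. If there is no arrow α with s α = x and S α = ε (i.e. α_{x,ε} = ∅), then the set Θ_{x,ε} of antipaths θ with t θ = x and T θ = ε contains an antipath of maximal length; in fact every antipath in Θ_{x,ε} has length at most |Γ₁|. -/
noncomputable section
open Classical

namespace Quiv

variable (Q : Quiv)

/-- `l` is an antipath: all letters are arrows and each consecutive pair of
arrows is a relation. -/
def IsAntipath (R : Set (List Q.A)) (l : List Q.A) : Prop :=
  l.Chain' fun a b => Q.src a = Q.tgt b ∧ [a, b] ∈ R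

/-- `l` belongs to `Θ_{x,ε}`: it is an antipath with `t l = x` and `T l = ε`
(the trivial antipath, represented by `[]`, always qualifies). -/
def InTheta (R : Set (List Q.A)) (T : Q.A → ℤ) (x : Q.V) (ε : ℤ) (l : List Q.A) : Prop :=
  Q.IsAntipath R l ∧ ∀ a ∈ l.head?, Q.tgt a = x ∧ T a = ε

end Quiv

/-- In a gentle bound quiver, if there is no arrow `α` with `s α = x` and `S α = ε`,
then every antipath in `Θ_{x,ε}` has length at most `|Γ₁|`, and `Θ_{x,ε}` contains
an antipath of maximal length. -/
theorem stmt_6 (Q : Quiv) [Fintype Q.A] (R : Set (List Q.A)) (S T : Q.A → ℤ)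
    (hgentle : Q.IsGentle R S T) (hadm : Q.Admissible R)
    (x : Q.V) (ε : ℤ) (hε : ε = 1 ∨ ε = -1)
    (hno : ¬ ∃ a : Q.A, Q.src a = x ∧ S a = ε) :
    (∀ l : List Q.A, Q.InTheta R T x ε l → l.length ≤ Fintype.card Q.A) ∧
    (∃ l₀ : List Q.A, Q.InTheta R T x ε l₀ ∧
      ∀ l : List Q.A, Q.InTheta R T x ε l → l.length ≤ l₀.length) := by
  obtain ⟨hV, hA, hR, hS1, hT1, hSsrc, hTtgt, hSnR, hSR⟩ := hgentle
  -- predecessor uniqueness in relations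
  have pred_unique : ∀ a a' c, [a, c] ∈ R → [a', c] ∈ R → a = a' := by
    intro a a' c h1 h2
    by_contra hne
    have hc1 : Q.src a = Q.tgt c := by
      have := (hR _ h1).1
      simpa [Quiv.ChainP, List.Chain'] using this
    have hc2 : Q.src a' = Q.tgt c := by
      have := (hR _ h2).1
      simpa [Quiv.ChainP, List.Chain'] using this
    have e1 := hSR a c hc1 h1
    have e2 := hSR a' c hc2 h2
    have e3 := hSsrc a a' (hc1.trans hc2.symm) hne
    rcases hT1 c with h | h <;> omega
  have bound : ∀ l : List Q.A, Q.InTheta R T x ε l → l.length ≤ Fintype.card Q.A := by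
    rintro l ⟨hchain, hhead⟩
    have hch := List.isChain_iff_getElem.mp hchain
    -- if two indices give equal arrows, contradiction
    have key : ∀ p q (hq : q < l.length) (hpq : p < q),
        l[p]'(Nat.lt_trans hpq hq) = l[q]'hq → False := by
      have step : ∀ p q (hq : q < l.length) (hpq : p < q),
          l[p]'(Nat.lt_trans hpq hq) = l[q]'hq →
          ∃ m, ∃ hm : m < l.length, 0 < m ∧ l[0]'(Nat.lt_of_le_of_lt (Nat.zero_le m) hm) = l[m]'hm := by
        intro p
        induction p with
        | zero => intro q hq hpq he; exact ⟨q, hq, hpq, he⟩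
        | succ n ih =>
          intro q hq hpq he
          obtain ⟨q', rfl⟩ : ∃ q', q = q' + 1 :=
            ⟨q - 1, by omega⟩
          have h1 := hch n (by omega)
          have h2 := hch q' (by omega)
          have h2' : [l[q']'(by omega), l[n+1]'(by omega)] ∈ R := by
            rw [he]; exact h2.2
          have heq : l[n]'(by omega) = l[q']'(by omega) :=
            pred_unique _ _ _ h1.2 h2'
          exact ih q' (by omega) (by omega) heq
      intro p q hq hpq he
      obtain ⟨m, hm, hm0, he0⟩ := step p q hq hpq he
      obtain ⟨m', rfl⟩ : ∃ m', m = m' + 1 := ⟨m - 1, by omega⟩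
      have hrel := hch m' (by omega)
      have hlne : l ≠ [] := List.ne_nil_of_length_pos (by omega)
      have hl0 : l[0]'(by omega) ∈ l.head? := by
        rw [List.head?_eq_head hlne, Option.mem_some_iff]
        exact (List.getElem_zero (by omega)).symm
      obtain ⟨htx, hTε⟩ := hhead _ hl0
      apply hno
      refine ⟨l[m']'(by omega), ?_, ?_⟩
      · rw [hrel.1, ← he0, htx]
      · have := hSR _ _ hrel.1 hrel.2
        rw [this, ← he0, hTε]
    have hnd : l.Nodup := by
      rw [List.nodup_iff_injective_get]
      intro i j hij
      by_contra hne
      rcases lt_trichotomy i.1 j.1 with h | h | h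
      · exact key i j j.2 h (by simpa [List.get_eq_getElem] using hij)
      · exact hne (Fin.ext h)
      · exact key j i i.2 h (by simpa [List.get_eq_getElem] using hij.symm)
    exact hnd.length_le_card
  refine ⟨bound, ?_⟩
  classical
  set s : Finset ℕ := (Finset.range (Fintype.card Q.A + 1)).filter
    (fun n => ∃ l, Q.InTheta R T x ε l ∧ l.length = n) with hs
  have h0 : (0 : ℕ) ∈ s := by
    rw [hs, Finset.mem_filter]
    exact ⟨Finset.mem_range.mpr (by omega),
      ⟨[], ⟨List.isChain_nil, by simp⟩, rfl⟩⟩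
  have hne : s.Nonempty := ⟨0, h0⟩
  obtain ⟨l₀, hl₀, hlen⟩ := (Finset.mem_filter.mp (s.max'_mem hne)).2
  refine ⟨l₀, hl₀, fun l hl => ?_⟩
  have hmem : l.length ∈ s := by
    rw [hs, Finset.mem_filter]
    exact ⟨Finset.mem_range.mpr (by have := bound l hl; omega), ⟨l, hl, rfl⟩⟩
  calc l.length ≤ s.max' hne := Finset.le_max' s _ hmem
    _ = l₀.length := hlen.symm
end
end

section
/- Let ζ', ζ'' be strings in an almost gentle bound quiver with t ζ' = t ζ'' and T ζ' = T ζ''. Then the relation ≤_t (defined via the length l of the maximal common initial segment and the conditions: ζ' <_t ζ'' iff either ℓ(ζ'') > l and α_{l+1}(ζ'') ∈ Γ₁, or ℓ(ζ') > l and α_{l+1}⁻¹(ζ') ∈ Γ₁) is a total order on the set of strings with fixed target t and fixed value of T. -/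
noncomputable section
open Classical

namespace Quiv

variable (Q : Quiv)

/-- The length of the maximal common initial segment of two letter lists. -/
def cpl [DecidableEq Q.A] : List Q.Letter → List Q.Letter → ℕ
  | a :: s, b :: t => if a = b then cpl s t + 1 else 0
  | _, _ => 0

/-- The strict order `ζ' <_t ζ''` on strings with common target and `T`-value. -/
def ltT [DecidableEq Q.A] (z' z'' : List Q.Letter) : Prop :=
  (∃ a : Q.A, z''[Q.cpl z' z'']? = some (Sum.inl a)) ∨
  (∃ a : Q.A, z'[Q.cpl z' z'']? = some (Sum.inr a))

/-- The order `ζ' ≤_t ζ''`. -/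
def leT [DecidableEq Q.A] (z' z'' : List Q.Letter) : Prop :=
  z' = z'' ∨ Q.ltT z' z''

/-- Membership in the set of strings with target `x` and `T`-value `ε`
(the empty list represents the trivial string `1_{x,-ε}`). -/
def InTset (R : Set (List Q.A)) (S T : Q.A → ℤ) (x : Q.V) (ε : ℤ)
    (z : List Q.Letter) : Prop :=
  Q.IsStringList R z ∧ ∀ a ∈ z.head?, Q.tgtL a = x ∧ Q.TL S T a = ε

end Quiv


namespace Quiv

variable (Q : Quiv) [DecidableEq Q.A]

lemma cpl_comm (s t : List Q.Letter) : Q.cpl s t = Q.cpl t s := by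
  induction s generalizing t with
  | nil => cases t <;> rfl
  | cons a s ih =>
    cases t with
    | nil => rfl
    | cons b t =>
      show (if a = b then Q.cpl s t + 1 else 0) = (if b = a then Q.cpl t s + 1 else 0)
      by_cases h : a = b
      · rw [if_pos h, if_pos h.symm, ih]
      · rw [if_neg h, if_neg (Ne.symm h)]

lemma cpl_pre (s t : List Q.Letter) :
    ∀ j < Q.cpl s t, s[j]? = t[j]? ∧ (s[j]?).isSome := by
  induction s generalizing t with
  | nil => intro j hj; simp [cpl] at hj
  | cons a s ih =>
    cases t with
    | nil => intro j hj; simp [cpl] at hj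
    | cons b t =>
      intro j hj
      have hj' : (if a = b then Q.cpl s t + 1 else 0) = Q.cpl (a::s) (b::t) := rfl
      rw [← hj'] at hj
      by_cases h : a = b
      · rw [if_pos h] at hj
        cases j with
        | zero => simp [h]
        | succ j => simpa using ih t j (by omega)
      · rw [if_neg h] at hj; omega

lemma cpl_stop (s t : List Q.Letter) (h : s[Q.cpl s t]? = t[Q.cpl s t]?) :
    s[Q.cpl s t]? = none := by
  induction s generalizing t with
  | nil => simp
  | cons a s ih =>
    cases t with
    | nil => simp [show Q.cpl (a::s) [] = 0 from rfl] at h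
    | cons b t =>
      by_cases hab : a = b
      · have he : Q.cpl (a::s) (b::t) = Q.cpl s t + 1 := by
          show (if a = b then Q.cpl s t + 1 else 0) = _
          rw [if_pos hab]
        rw [he] at h ⊢
        simpa using ih t (by simpa using h)
      · have he : Q.cpl (a::s) (b::t) = 0 := by
          show (if a = b then Q.cpl s t + 1 else 0) = _
          rw [if_neg hab]
        rw [he] at h
        simp at h
        exact absurd h hab

lemma cpl_eq_of (s t : List Q.Letter) (l : ℕ)
    (hpre : ∀ j < l, s[j]? = t[j]? ∧ (s[j]?).isSome)
    (hne : s[l]? ≠ t[l]?) : Q.cpl s t = l := by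
  induction l generalizing s t with
  | zero =>
    cases s with
    | nil => cases t <;> rfl
    | cons a s =>
      cases t with
      | nil => rfl
      | cons b t =>
        have hab : a ≠ b := by intro h; apply hne; simp [h]
        show (if a = b then Q.cpl s t + 1 else 0) = 0
        rw [if_neg hab]
  | succ l ih =>
    obtain ⟨h0, hs⟩ := hpre 0 (Nat.succ_pos l)
    cases s with
    | nil => simp at hs
    | cons a s =>
      cases t with
      | nil => simp at h0
      | cons b t =>
        have hab : a = b := by simpa using h0
        have he : Q.cpl (a::s) (b::t) = Q.cpl s t + 1 := by
          show (if a = b then Q.cpl s t + 1 else 0) = _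
          rw [if_pos hab]
        rw [he, ih s t (fun j hj => by simpa using hpre (j+1) (by omega))
          (by simpa using hne)]

/-- Key uniqueness: two strings in the same `T`-set agreeing on the first `l`
letters, whose `l`-th letters are both direct or both inverse, have equal
`l`-th letters. -/
lemma tset_ext (R : Set (List Q.A)) (S T : Q.A → ℤ)
    (hST : Q.StringFuns R S T) (x : Q.V) (ε : ℤ)
    {z' z'' : List Q.Letter}
    (h' : Q.InTset R S T x ε z') (h'' : Q.InTset R S T x ε z'')
    {l : ℕ} (hpre : ∀ j < l, z'[j]? = z''[j]?)
    {u v : Q.Letter} (hu : z'[l]? = some u) (hv : z''[l]? = some v)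
    (hlr : u.isLeft = v.isLeft) : u = v := by
  obtain ⟨hS1, hT1, hSsrc, hTtgt, hSTnr, hSTr⟩ := hST
  cases l with
  | zero =>
    have hu' := h'.2 u (by rw [List.head?_eq_getElem?]; exact hu)
    have hv' := h''.2 v (by rw [List.head?_eq_getElem?]; exact hv)
    rcases u with a | a <;> rcases v with b | b <;> simp at hlr <;> try rfl
    · -- both direct arrows
      simp only [tgtL, TL, Sum.elim_inl] at hu' hv'
      by_contra hne
      have hab : a ≠ b := by simpa using hne
      have := hTtgt a b (hu'.1.trans hv'.1.symm) hab
      have h1 := hT1 a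
      have e1 := hu'.2
      have e2 := hv'.2
      omega
    · simp only [tgtL, TL, Sum.elim_inr] at hu' hv'
      by_contra hne
      have hab : a ≠ b := by simpa using hne
      have := hSsrc a b (hu'.1.trans hv'.1.symm) hab
      have h1 := hS1 a
      have e1 := hu'.2
      have e2 := hv'.2
      omega
  | succ l =>
    obtain ⟨hlt', hget'⟩ := List.getElem?_eq_some_iff.mp hu
    obtain ⟨hlt'', hget''⟩ := List.getElem?_eq_some_iff.mp hv
    have h0 := hpre l (Nat.lt_succ_self l)
    set c : Q.Letter := z'[l]'(by omega) with hc
    have hc' : z'[l]? = some c := List.getElem?_eq_some_iff.mpr ⟨by omega, rfl⟩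
    have hc'' : z''[l]? = some c := by rw [← h0]; exact hc'
    obtain ⟨hlt2, hget2⟩ := List.getElem?_eq_some_iff.mp hc''
    have hch' := (List.isChain_iff_getElem.mp h'.1) l (by omega)
    have hch'' := (List.isChain_iff_getElem.mp h''.1) l (by omega)
    simp -failIfUnchanged only [List.get_eq_getElem] at hch' hch''
    rw [hget'] at hch'
    rw [hget'', hget2] at hch''
    rw [← hc] at hch'
    rcases c with c0 | c0 <;> rcases u with a | a <;> rcases v with b | b <;>
      simp at hlr <;> try rfl
    · -- c = inl c0, u = inl a, v = inl b
      simp only [srcL, tgtL, BadPair, Sum.elim_inl] at hch' hch''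
      by_contra hne
      have hab : a ≠ b := by simpa using hne
      have e1 := hSTnr c0 a hch'.1 hch'.2
      have e2 := hSTnr c0 b hch''.1 hch''.2
      have e3 := hTtgt a b (hch'.1.symm.trans hch''.1) hab
      have h1 := hT1 a
      omega
    · -- c = inl c0, u = inr a, v = inr b
      simp only [srcL, tgtL, BadPair, Sum.elim_inl, Sum.elim_inr] at hch' hch''
      by_contra hne
      have hab : a ≠ b := by simpa using hne
      have e1 := hSsrc a c0 (hch'.1).symm (fun h => hch'.2 h.symm)
      have e2 := hSsrc b c0 (hch''.1).symm (fun h => hch''.2 h.symm)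
      have e3 := hSsrc a b (hch'.1.symm.trans hch''.1) hab
      have h1 := hS1 a
      have h2 := hS1 c0
      omega
    · -- c = inr c0, u = inl a, v = inl b
      simp only [srcL, tgtL, BadPair, Sum.elim_inl, Sum.elim_inr] at hch' hch''
      by_contra hne
      have hab : a ≠ b := by simpa using hne
      have e1 := hTtgt a c0 (hch'.1).symm (fun h => hch'.2 h.symm)
      have e2 := hTtgt b c0 (hch''.1).symm (fun h => hch''.2 h.symm)
      have e3 := hTtgt a b (hch'.1.symm.trans hch''.1) hab
      have h1 := hT1 a
      have h2 := hT1 c0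
      omega
    · -- c = inr c0, u = inr a, v = inr b
      simp only [srcL, tgtL, BadPair, Sum.elim_inr] at hch' hch''
      by_contra hne
      have hab : a ≠ b := by simpa using hne
      have e1 := hSTnr a c0 hch'.1.symm hch'.2
      have e2 := hSTnr b c0 hch''.1.symm hch''.2
      have e3 := hSsrc a b (hch'.1.symm.trans hch''.1) hab
      have h1 := hS1 a
      omega

end Quiv

/-- In an almost gentle bound quiver, the relation `≤_t` is a total order on the
set of strings with fixed target `x` and fixed value `ε` of `T`. -/
theorem stmt_17 (Q : Quiv) [DecidableEq Q.A] (R : Set (List Q.A)) (S T : Q.A → ℤ)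
    (hmono : ∀ ρ ∈ R, Q.ChainP ρ ∧ 2 ≤ ρ.length) (hadm : Q.Admissible R)
    (hST : Q.StringFuns R S T) (x : Q.V) (ε : ℤ) (hε : ε = 1 ∨ ε = -1) :
    (∀ z, Q.InTset R S T x ε z → Q.leT z z) ∧
    (∀ z' z'', Q.InTset R S T x ε z' → Q.InTset R S T x ε z'' →
      Q.leT z' z'' → Q.leT z'' z' → z' = z'') ∧
    (∀ z' z'' z''', Q.InTset R S T x ε z' → Q.InTset R S T x ε z'' →
      Q.InTset R S T x ε z''' → Q.leT z' z'' → Q.leT z'' z''' → Q.leT z' z''') ∧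
    (∀ z' z'', Q.InTset R S T x ε z' → Q.InTset R S T x ε z'' →
      Q.leT z' z'' ∨ Q.leT z'' z') := by
  refine ⟨fun z _ => Or.inl rfl, ?_, ?_, ?_⟩
  · -- antisymmetry
    intro z' z'' h' h'' h1 h2
    rcases (h1 : z' = z'' ∨ Q.ltT z' z'') with rfl | h1
    · rfl
    rcases (h2 : z'' = z' ∨ Q.ltT z'' z') with rfl | h2
    · rfl
    exfalso
    have pre : ∀ j < Q.cpl z' z'', z'[j]? = z''[j]? :=
      fun j hj => (Q.cpl_pre z' z'' j hj).1
    rcases (h1 : (∃ a : Q.A, z''[Q.cpl z' z'']? = some (Sum.inl a)) ∨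
        (∃ a : Q.A, z'[Q.cpl z' z'']? = some (Sum.inr a))) with ⟨a, ha⟩ | ⟨a, ha⟩ <;>
      rcases (h2 : (∃ b : Q.A, z'[Q.cpl z'' z']? = some (Sum.inl b)) ∨
        (∃ b : Q.A, z''[Q.cpl z'' z']? = some (Sum.inr b))) with ⟨b, hb⟩ | ⟨b, hb⟩ <;>
      rw [Q.cpl_comm z'' z'] at hb
    · have hEq := Q.tset_ext R S T hST x ε h' h'' pre hb ha rfl
      have h4 : z'[Q.cpl z' z'']? = z''[Q.cpl z' z'']? := by rw [hb, ha, hEq]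
      have h5 := Q.cpl_stop z' z'' h4
      rw [hb] at h5; exact Option.some_ne_none _ h5
    · rw [ha] at hb; simp at hb
    · rw [ha] at hb; simp at hb
    · have hEq := Q.tset_ext R S T hST x ε h' h'' pre ha hb rfl
      have h4 : z'[Q.cpl z' z'']? = z''[Q.cpl z' z'']? := by rw [ha, hb, hEq]
      have h5 := Q.cpl_stop z' z'' h4
      rw [ha] at h5; exact Option.some_ne_none _ h5
  · -- transitivity
    intro z' z'' z''' h' h'' h''' h1 h2
    rcases (h1 : z' = z'' ∨ Q.ltT z' z'') with rfl | h1
    · exact h2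
    rcases (h2 : z'' = z''' ∨ Q.ltT z'' z''') with rfl | h2
    · exact Or.inr h1
    refine Or.inr ?_
    show (∃ a : Q.A, z'''[Q.cpl z' z''']? = some (Sum.inl a)) ∨
        (∃ a : Q.A, z'[Q.cpl z' z''']? = some (Sum.inr a))
    rcases lt_trichotomy (Q.cpl z' z'') (Q.cpl z'' z''') with hlt | heq | hgt
    · -- cpl z' z'' < cpl z'' z'''
      have h3 : z'''[Q.cpl z' z'']? = z''[Q.cpl z' z'']? :=
        ((Q.cpl_pre z'' z''' _ hlt).1).symm
      have pre13 : ∀ j < Q.cpl z' z'', z'[j]? = z'''[j]? ∧ (z'[j]?).isSome :=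
        fun j hj => ⟨((Q.cpl_pre z' z'' j hj).1).trans
          ((Q.cpl_pre z'' z''' j (hj.trans hlt)).1), (Q.cpl_pre z' z'' j hj).2⟩
      rcases (h1 : (∃ a : Q.A, z''[Q.cpl z' z'']? = some (Sum.inl a)) ∨
          (∃ a : Q.A, z'[Q.cpl z' z'']? = some (Sum.inr a))) with ⟨a, ha⟩ | ⟨a, ha⟩
      · have hneq : z'[Q.cpl z' z'']? ≠ z'''[Q.cpl z' z'']? := by
          intro h
          have h4 : z'[Q.cpl z' z'']? = z''[Q.cpl z' z'']? := by rw [h, h3]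
          have h5 := Q.cpl_stop z' z'' h4
          rw [h4, ha] at h5; exact Option.some_ne_none _ h5
        have hc : Q.cpl z' z''' = Q.cpl z' z'' := Q.cpl_eq_of _ _ _ pre13 hneq
        exact Or.inl ⟨a, by rw [hc, h3, ha]⟩
      · have hneq : z'[Q.cpl z' z'']? ≠ z'''[Q.cpl z' z'']? := by
          intro h
          have h4 : z'[Q.cpl z' z'']? = z''[Q.cpl z' z'']? := by rw [h, h3]
          have h5 := Q.cpl_stop z' z'' h4
          rw [ha] at h5; exact Option.some_ne_none _ h5
        have hc : Q.cpl z' z''' = Q.cpl z' z'' := Q.cpl_eq_of _ _ _ pre13 hneq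
        exact Or.inr ⟨a, by rw [hc]; exact ha⟩
    · -- equal lengths of common prefixes
      have pre13 : ∀ j < Q.cpl z' z'', z'[j]? = z'''[j]? ∧ (z'[j]?).isSome :=
        fun j hj => ⟨((Q.cpl_pre z' z'' j hj).1).trans
          ((Q.cpl_pre z'' z''' j (heq ▸ hj)).1), (Q.cpl_pre z' z'' j hj).2⟩
      rcases (h1 : (∃ a : Q.A, z''[Q.cpl z' z'']? = some (Sum.inl a)) ∨
          (∃ a : Q.A, z'[Q.cpl z' z'']? = some (Sum.inr a))) with ⟨a, ha⟩ | ⟨a, ha⟩ <;>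
        rcases (h2 : (∃ c : Q.A, z'''[Q.cpl z'' z''']? = some (Sum.inl c)) ∨
            (∃ c : Q.A, z''[Q.cpl z'' z''']? = some (Sum.inr c))) with ⟨c, hc2⟩ | ⟨c, hc2⟩ <;>
        rw [← heq] at hc2
      · exfalso
        have hpre2 : ∀ j < Q.cpl z' z'', z''[j]? = z'''[j]? :=
          fun j hj => (Q.cpl_pre z'' z''' j (heq ▸ hj)).1
        have hEq := Q.tset_ext R S T hST x ε h'' h''' hpre2 ha hc2 rfl
        have h4 : z''[Q.cpl z'' z''']? = z'''[Q.cpl z'' z''']? := by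
          rw [← heq, ha, hc2, hEq]
        have h5 := Q.cpl_stop z'' z''' h4
        rw [← heq, ha] at h5; exact Option.some_ne_none _ h5
      · rw [ha] at hc2; simp at hc2
      · have hneq : z'[Q.cpl z' z'']? ≠ z'''[Q.cpl z' z'']? := by
          rw [ha, hc2]; simp
        have hc : Q.cpl z' z''' = Q.cpl z' z'' := Q.cpl_eq_of _ _ _ pre13 hneq
        exact Or.inl ⟨c, by rw [hc]; exact hc2⟩
      · exfalso
        have pre12 : ∀ j < Q.cpl z' z'', z'[j]? = z''[j]? :=
          fun j hj => (Q.cpl_pre z' z'' j hj).1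
        have hEq := Q.tset_ext R S T hST x ε h' h'' pre12 ha hc2 rfl
        have h4 : z'[Q.cpl z' z'']? = z''[Q.cpl z' z'']? := by rw [ha, hc2, hEq]
        have h5 := Q.cpl_stop z' z'' h4
        rw [ha] at h5; exact Option.some_ne_none _ h5
    · -- cpl z'' z''' < cpl z' z''
      have h3 : z'[Q.cpl z'' z''']? = z''[Q.cpl z'' z''']? :=
        (Q.cpl_pre z' z'' _ hgt).1
      have pre13 : ∀ j < Q.cpl z'' z''', z'[j]? = z'''[j]? ∧ (z'[j]?).isSome :=
        fun j hj => ⟨((Q.cpl_pre z' z'' j (hj.trans hgt)).1).trans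
          ((Q.cpl_pre z'' z''' j hj).1), (Q.cpl_pre z' z'' j (hj.trans hgt)).2⟩
      rcases (h2 : (∃ c : Q.A, z'''[Q.cpl z'' z''']? = some (Sum.inl c)) ∨
          (∃ c : Q.A, z''[Q.cpl z'' z''']? = some (Sum.inr c))) with ⟨c, hc2⟩ | ⟨c, hc2⟩
      · have hneq : z'[Q.cpl z'' z''']? ≠ z'''[Q.cpl z'' z''']? := by
          intro h
          have h4 : z''[Q.cpl z'' z''']? = z'''[Q.cpl z'' z''']? := by rw [← h3, h]
          have h5 := Q.cpl_stop z'' z''' h4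
          rw [hc2] at h4
          rw [h4] at h5; exact Option.some_ne_none _ h5
        have hc : Q.cpl z' z''' = Q.cpl z'' z''' := Q.cpl_eq_of _ _ _ pre13 hneq
        exact Or.inl ⟨c, by rw [hc]; exact hc2⟩
      · have hx : z'[Q.cpl z'' z''']? = some (Sum.inr c) := h3.trans hc2
        have hneq : z'[Q.cpl z'' z''']? ≠ z'''[Q.cpl z'' z''']? := by
          intro h
          have h4 : z''[Q.cpl z'' z''']? = z'''[Q.cpl z'' z''']? := by rw [← h3, h]
          have h5 := Q.cpl_stop z'' z''' h4
          rw [hc2] at h5; exact Option.some_ne_none _ h5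
        have hc : Q.cpl z' z''' = Q.cpl z'' z''' := Q.cpl_eq_of _ _ _ pre13 hneq
        exact Or.inr ⟨c, by rw [hc]; exact hx⟩
  · -- totality
    intro z' z'' h' h''
    by_cases hzz : z' = z''
    · exact Or.inl (Or.inl hzz)
    have hne : z'[Q.cpl z' z'']? ≠ z''[Q.cpl z' z'']? := by
      intro h
      have h1 := Q.cpl_stop z' z'' h
      have h2 : z''[Q.cpl z' z'']? = none := by rw [← h, h1]
      apply hzz
      apply List.ext_getElem?
      intro i
      rcases lt_or_ge i (Q.cpl z' z'') with hi | hi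
      · exact (Q.cpl_pre z' z'' i hi).1
      · rw [List.getElem?_eq_none (le_trans (List.getElem?_eq_none_iff.mp h1) hi),
            List.getElem?_eq_none (le_trans (List.getElem?_eq_none_iff.mp h2) hi)]
    have pre : ∀ j < Q.cpl z' z'', z'[j]? = z''[j]? :=
      fun j hj => (Q.cpl_pre z' z'' j hj).1
    have goal1 : ∀ a : Q.A, z''[Q.cpl z' z'']? = some (Sum.inl a) →
        Q.leT z' z'' ∨ Q.leT z'' z' :=
      fun a ha => Or.inl (Or.inr (Or.inl ⟨a, ha⟩))
    have goal2 : ∀ a : Q.A, z'[Q.cpl z' z'']? = some (Sum.inr a) →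
        Q.leT z' z'' ∨ Q.leT z'' z' :=
      fun a ha => Or.inl (Or.inr (Or.inr ⟨a, ha⟩))
    have goal3 : ∀ a : Q.A, z'[Q.cpl z' z'']? = some (Sum.inl a) →
        Q.leT z' z'' ∨ Q.leT z'' z' := fun a ha =>
      Or.inr (Or.inr (Or.inl ⟨a, by rw [Q.cpl_comm z'' z']; exact ha⟩))
    have goal4 : ∀ a : Q.A, z''[Q.cpl z' z'']? = some (Sum.inr a) →
        Q.leT z' z'' ∨ Q.leT z'' z' := fun a ha =>
      Or.inr (Or.inr (Or.inr ⟨a, by rw [Q.cpl_comm z'' z']; exact ha⟩))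
    rcases hu : z'[Q.cpl z' z'']? with _ | u
    · rcases hv : z''[Q.cpl z' z'']? with _ | v
      · exact absurd (hu.trans hv.symm) hne
      · rcases v with a | a
        · exact goal1 a hv
        · exact goal4 a hv
    · rcases hv : z''[Q.cpl z' z'']? with _ | v
      · rcases u with a | a
        · exact goal3 a hu
        · exact goal2 a hu
      · rcases u with a | a <;> rcases v with b | b
        · exfalso
          have hEq := Q.tset_ext R S T hST x ε h' h'' pre hu hv rfl
          exact hne (by rw [hu, hv, hEq])
        · exact goal3 a hu
        · exact goal1 b hv
        · exfalso
          have hEq := Q.tset_ext R S T hST x ε h' h'' pre hu hv rfl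
          exact hne (by rw [hu, hv, hEq])
end
end
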